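/- Let s ∈ (0,1) and q ≥ 1/s − 1. Let Ω be a domain contained in {(z,w) ∈ ℂ² : |z| < 4, 1 < |w| < 6} whose fibers Ω_w := {z ∈ ℂ : (z,w) ∈ Ω} depend only on |w| and which satisfies, for some ε ∈ (0,1/2) and c > 0: (i) Ω_w ∩ {|z| ≤ c} = ∅ whenever ||w|−3| ≥ ε and ||w|−4| ≥ ε; (ii) for t := |w|−3 with 0 < |t| ≤ ε, one has {z : e^{−|t|^{−s}} < |z| < 1} ⊆ Ω_w ⊆ {z : (1/2)e^{−2|t|^{−s}} < |z| < 4}; (iii) for t := |w|−4 with 0 < |t| ≤ ε, one has Ω_w ⊆ {z : (1/2)e^{−2|t|^{−s}} < |z| < 4}. Then the function (z,w) ↦ 1/z satisfies ∫_Ω |1/z|² dλ < ∞ (so 1/z ∈ A²(Ω)) but ∫_Ω |1/z|² (log⁺(1/|z|))^q dλ = ∞ (so 1/z ∉ A²(log A)^q(Ω)). -/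

import Mathlib

open MeasureTheory Metric Set
open scoped ENNReal

noncomputable section

/-- Lebesgue measure on `ℂⁿ = EuclideanSpace ℂ (Fin n)` (defeq to the product measure). -/
instance (n : ℕ) : MeasureSpace (EuclideanSpace ℂ (Fin n)) :=
  { volume := Measure.map (WithLp.toLp 2) (volume : Measure (Fin n → ℂ)) }

variable {E : Type*} [NormedAddCommGroup E] [NormedSpace ℂ E]

/-- Euclidean distance to the boundary `∂Ω`. -/
def bdist (Ω : Set E) (z : E) : ℝ := Metric.infDist z (frontier Ω)

/-- `u` is plurisubharmonic on `Ω`: upper semicontinuous on `Ω`, and satisfying the sub-mean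
value inequality over circles in every complex line (whenever the corresponding closed disc is
contained in `Ω`). -/
def PSHOn (u : E → ℝ) (Ω : Set E) : Prop :=
  UpperSemicontinuousOn u Ω ∧
  ∀ z ∈ Ω, ∀ v : E, ∀ r : ℝ, 0 < r →
    (∀ w : ℂ, ‖w‖ ≤ r → z + w • v ∈ Ω) →
    u z ≤ (1 / (2 * Real.pi)) *
      ∫ θ in (0:ℝ)..(2 * Real.pi), u (z + ((r : ℂ) * Complex.exp ((θ : ℂ) * Complex.I)) • v)

/-- A domain is pseudoconvex if `-log δ` is plurisubharmonic on it. -/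
def Pseudoconvex (Ω : Set E) : Prop :=
  PSHOn (fun z => -Real.log (bdist Ω z)) Ω

/-- The set of exponents `α ≥ 0` admitting a continuous negative plurisubharmonic `ρ` on `Ω`
with `-ρ ≤ C (-log δ)^{-α}` near `∂Ω`. -/
def logHypSet (Ω : Set E) : Set ℝ :=
  {α : ℝ | 0 ≤ α ∧ ∃ ρ : E → ℝ, ContinuousOn ρ Ω ∧ PSHOn ρ Ω ∧ (∀ z ∈ Ω, ρ z < 0) ∧
    ∃ C > (0:ℝ), ∃ ε > (0:ℝ), ∀ z ∈ Ω, bdist Ω z < ε →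
      -ρ z ≤ C * (-Real.log (bdist Ω z)) ^ (-α)}

/-- The log-hyperconvexity index `α_l(Ω)` (as an extended real number). -/
def logHypIndex (Ω : Set E) : EReal := sSup ((fun α : ℝ => (α : EReal)) '' logHypSet Ω)

/-- `log⁺ t = max (log t) 0`. -/
def logPlus (t : ℝ) : ℝ := max (Real.log t) 0

variable [MeasureSpace E]

/-- Membership in the Bergman space `A²(Ω)`. -/
def MemA2 (Ω : Set E) (f : E → ℂ) : Prop :=
  DifferentiableOn ℂ f Ω ∧ (∫⁻ z in Ω, ENNReal.ofReal (‖f z‖ ^ 2)) < ⊤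

/-- Membership in `A²(log A)^q(Ω)`. -/
def MemA2LogA (Ω : Set E) (q : ℝ) (f : E → ℂ) : Prop :=
  DifferentiableOn ℂ f Ω ∧
    (∫⁻ z in Ω, ENNReal.ofReal (‖f z‖ ^ 2 * logPlus ‖f z‖ ^ q)) < ⊤

/-- `K` is the Bergman kernel of `Ω`: for each `w ∈ Ω`, `K(·,w) ∈ A²(Ω)`, and `K` reproduces
every element of `A²(Ω)`. -/
def IsBergmanKernel (Ω : Set E) (K : E → E → ℂ) : Prop :=
  (∀ w ∈ Ω, MemA2 Ω (fun z => K z w)) ∧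
  ∀ f, MemA2 Ω f → ∀ w ∈ Ω, f w = ∫ z in Ω, f z * (starRingEnd ℂ) (K z w)


section Helpers

open Real
open scoped Real

@[fun_prop]
theorem measurable_cabs : Measurable fun z : ℂ => ‖z‖ :=
  continuous_norm.measurable

theorem lintegral_comp_polarCoord_symm_real (g : ℝ × ℝ → ℝ≥0∞) :
    (∫⁻ p in polarCoord.target, ENNReal.ofReal p.1 * g (polarCoord.symm p)) = ∫⁻ p, g p := by
  set B : ℝ × ℝ → ℝ × ℝ →L[ℝ] ℝ × ℝ := fun p =>
    LinearMap.toContinuousLinearMap (Matrix.toLin (Module.Basis.finTwoProd ℝ) (Module.Basis.finTwoProd ℝ)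
      !![Real.cos p.2, -p.1 * Real.sin p.2; Real.sin p.2, p.1 * Real.cos p.2])
  have B_det : ∀ p, (B p).det = p.1 := by
    intro p
    conv_rhs => rw [← one_mul p.1, ← Real.cos_sq_add_sin_sq p.2]
    simp only [B, neg_mul, LinearMap.det_toContinuousLinearMap, LinearMap.det_toLin,
      Matrix.det_fin_two_of, sub_neg_eq_add]
    ring
  symm
  calc
    ∫⁻ p, g p = ∫⁻ p in polarCoord.source, g p := by
      rw [← setLIntegral_univ]
      exact setLIntegral_congr polarCoord_source_ae_eq_univ.symm
    _ = ∫⁻ p in polarCoord.symm '' polarCoord.target, g p := by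
      rw [polarCoord.symm_image_target_eq_source]
    _ = ∫⁻ p in polarCoord.target, ENNReal.ofReal |(B p).det| * g (polarCoord.symm p) := by
      exact lintegral_image_eq_lintegral_abs_det_fderiv_mul volume
        polarCoord.open_target.measurableSet
        (fun p _ => (hasFDerivAt_polarCoord_symm p).hasFDerivWithinAt)
        polarCoord.symm.injOn g
    _ = ∫⁻ p in polarCoord.target, ENNReal.ofReal p.1 * g (polarCoord.symm p) := by
      refine setLIntegral_congr_fun polarCoord.open_target.measurableSet
        (fun x hx => ?_)
      rw [B_det, abs_of_pos hx.1]

theorem lintegral_comp_polarCoord_symm_cx (g : ℂ → ℝ≥0∞) (hg : Measurable g) :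
    (∫⁻ p in polarCoord.target, ENNReal.ofReal p.1 * g (Complex.polarCoord.symm p)) = ∫⁻ z, g z := by
  rw [← (Complex.volume_preserving_equiv_real_prod.symm).lintegral_comp hg,
    ← lintegral_comp_polarCoord_symm_real (fun p => g (Complex.measurableEquivRealProd.symm p))]
  rfl

theorem lintegral_annulus {G : ℝ → ℝ≥0∞} (hG : Measurable G) {a : ℝ} (ha : 0 ≤ a) (b : ℝ) :
    ∫⁻ z : ℂ in {z : ℂ | a < ‖z‖ ∧ ‖z‖ < b}, G (‖z‖)
      = ∫⁻ r in Ioo a b, ENNReal.ofReal (2 * π) * (ENNReal.ofReal r * G r) := by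
  set F : ℝ → ℝ≥0∞ := (Ioo a b).indicator G with hF
  have hFm : Measurable F := hG.indicator measurableSet_Ioo
  have hset : {z : ℂ | a < ‖z‖ ∧ ‖z‖ < b}
      = (fun z : ℂ => ‖z‖) ⁻¹' (Ioo a b) := by ext z; simp [Set.mem_Ioo]
  have habs : Measurable (fun z : ℂ => ‖z‖) := continuous_norm.measurable
  have h1 : ∫⁻ z : ℂ in {z : ℂ | a < ‖z‖ ∧ ‖z‖ < b}, G (‖z‖)
      = ∫⁻ z : ℂ, F (‖z‖) := by
    rw [hset, ← lintegral_indicator (habs measurableSet_Ioo)]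
    refine lintegral_congr fun z => ?_
    by_cases h : ‖z‖ ∈ Ioo a b
    · simp [F, Set.indicator, h]
    · simp [F, Set.indicator, h]
  rw [h1, ← lintegral_comp_polarCoord_symm_cx (fun z => F (‖z‖)) (hFm.comp habs)]
  have h2 : ∫⁻ p in polarCoord.target, ENNReal.ofReal p.1 * F (‖Complex.polarCoord.symm p‖)
      = ∫⁻ p in polarCoord.target, ENNReal.ofReal p.1 * F p.1 := by
    refine setLIntegral_congr_fun polarCoord.open_target.measurableSet
      (fun p hp => ?_)
    rw [Complex.norm_polarCoord_symm, abs_of_pos hp.1]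
  rw [h2]
  have h3 : (volume : Measure (ℝ × ℝ)).restrict polarCoord.target
      = ((volume : Measure ℝ).restrict (Ioi 0)).prod ((volume : Measure ℝ).restrict (Ioo (-π) π)) := by
    rw [Measure.prod_restrict, ← Measure.volume_eq_prod]; rfl
  rw [h3, lintegral_prod_symm' _ (by fun_prop)]
  have hC : (∫⁻ r, ENNReal.ofReal r * F r ∂((volume : Measure ℝ).restrict (Ioi 0)))
      = ∫⁻ r in Ioo a b, ENNReal.ofReal r * G r := by
    have hind : ∀ r : ℝ, ENNReal.ofReal r * F r
        = (Ioo a b).indicator (fun u => ENNReal.ofReal u * G u) r := by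
      intro r; by_cases h : r ∈ Ioo a b <;> simp [F, Set.indicator, h]
    simp_rw [hind]
    rw [lintegral_indicator measurableSet_Ioo, Measure.restrict_restrict measurableSet_Ioo]
    congr 2
    exact Set.inter_eq_left.mpr (fun r hr => lt_of_le_of_lt ha hr.1)
  simp only []
  rw [hC, lintegral_const, Measure.restrict_apply_univ, Real.volume_Ioo,
    lintegral_const_mul _ (show Measurable fun r => ENNReal.ofReal r * G r by fun_prop),
    mul_comm]
  congr 1
  rw [sub_neg_eq_add]
  ring_nf

theorem lintegral_inv_Ioo {a b : ℝ} (ha : 0 < a) (hab : a < b) :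
    ∫⁻ r in Ioo a b, ENNReal.ofReal r⁻¹ = ENNReal.ofReal (Real.log b - Real.log a) := by
  have hb : 0 < b := ha.trans hab
  have hint : IntegrableOn (fun x : ℝ => x⁻¹) (Ioo a b) := by
    refine (ContinuousOn.integrableOn_Icc (continuousOn_inv₀.mono ?_)).mono_set
      Ioo_subset_Icc_self
    intro x hx
    exact ne_of_gt (lt_of_lt_of_le ha hx.1)
  rw [← ofReal_integral_eq_lintegral_ofReal hint ?_]
  · have h0 : (0:ℝ) ∉ Set.uIcc a b := by
      intro h
      rw [Set.mem_uIcc] at h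
      rcases h with h | h <;> linarith [h.1, h.2]
    congr 1
    rw [← MeasureTheory.integral_Ioc_eq_integral_Ioo, ← intervalIntegral.integral_of_le hab.le,
      integral_inv h0, Real.log_div (ne_of_gt hb) (ne_of_gt ha)]
  · filter_upwards [ae_restrict_mem measurableSet_Ioo] with x hx
    exact inv_nonneg.2 (le_of_lt (ha.trans hx.1))

theorem lintegral_rpow_Ioo_lt_top {s ε : ℝ} (hs1 : s < 1) (hε : 0 < ε) :
    ∫⁻ t in Ioo (0:ℝ) ε, ENNReal.ofReal (t ^ (-s)) < ⊤ := by
  have h : IntegrableOn (fun t : ℝ => t ^ (-s)) (Ioo 0 ε) := by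
    have h2 := (intervalIntegral.intervalIntegrable_rpow' (a := 0) (b := ε)
      (by linarith : (-1:ℝ) < -s)).1
    exact h2.mono_set Ioo_subset_Ioc_self
  exact h.lintegral_lt_top

theorem lintegral_inv_Ioo_top {ε : ℝ} (hε : 0 < ε) :
    ∫⁻ t in Ioo (0:ℝ) ε, ENNReal.ofReal t⁻¹ = ⊤ := by
  by_contra h
  have hne : ∫⁻ t in Ioo (0:ℝ) ε, ENNReal.ofReal t⁻¹ ≠ ⊤ := h
  have key : ∀ n : ℕ, ENNReal.ofReal ((n:ℝ)+1) ≤ ∫⁻ t in Ioo (0:ℝ) ε, ENNReal.ofReal t⁻¹ := by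
    intro n
    have ha : 0 < ε * Real.exp (-((n:ℝ)+1)) := mul_pos hε (Real.exp_pos _)
    have hab : ε * Real.exp (-((n:ℝ)+1)) < ε := by
      nth_rewrite 2 [← mul_one ε]
      refine mul_lt_mul_of_pos_left ?_ hε
      rw [Real.exp_lt_one_iff]
      have := Nat.cast_nonneg (α := ℝ) n
      linarith
    have hval := lintegral_inv_Ioo ha hab
    have hsub : Ioo (ε * Real.exp (-((n:ℝ)+1))) ε ⊆ Ioo 0 ε := fun x hx => ⟨ha.trans hx.1, hx.2⟩
    refine le_trans ?_ (lintegral_mono_set hsub)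
    rw [hval, Real.log_mul (ne_of_gt hε) (Real.exp_ne_zero _), Real.log_exp]
    apply le_of_eq
    congr 1
    ring
  have hn := key (Nat.ceil ((∫⁻ t in Ioo (0:ℝ) ε, ENNReal.ofReal t⁻¹).toReal))
  rw [ENNReal.ofReal_le_iff_le_toReal hne] at hn
  have h2 := Nat.le_ceil ((∫⁻ t in Ioo (0:ℝ) ε, ENNReal.ofReal t⁻¹).toReal)
  linarith

theorem lintegral_Ioo_shift {G : ℝ → ℝ≥0∞} (m a b : ℝ) :
    ∫⁻ r in Ioo (a + m) (b + m), G (r - m) = ∫⁻ t in Ioo a b, G t := by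
  set F : ℝ → ℝ≥0∞ := (Ioo a b).indicator G with hF
  have h1 : ∫⁻ r in Ioo (a+m) (b+m), G (r - m) = ∫⁻ r, F (r + -m) := by
    rw [← lintegral_indicator measurableSet_Ioo]
    refine lintegral_congr fun r => ?_
    by_cases h : r ∈ Ioo (a+m) (b+m)
    · have h2 : r + -m ∈ Ioo a b := ⟨by linarith [h.1], by linarith [h.2]⟩
      simp [F, Set.indicator, h, h2, sub_eq_add_neg]
    · have h2 : r + -m ∉ Ioo a b := fun hc => h ⟨by linarith [hc.1], by linarith [hc.2]⟩
      simp [F, Set.indicator, h, h2]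
  rw [h1, lintegral_add_right_eq_self F (-m), hF, lintegral_indicator measurableSet_Ioo]

theorem lintegral_Ioo_reflect {G : ℝ → ℝ≥0∞} (hG : Measurable G) (m a b : ℝ) :
    ∫⁻ r in Ioo (m - b) (m - a), G (m - r) = ∫⁻ t in Ioo a b, G t := by
  set F : ℝ → ℝ≥0∞ := (Ioo a b).indicator G with hF
  have hFm : Measurable F := hG.indicator measurableSet_Ioo
  have h1 : ∫⁻ r in Ioo (m-b) (m-a), G (m - r) = ∫⁻ r, F (m + -r) := by
    rw [← lintegral_indicator measurableSet_Ioo]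
    refine lintegral_congr fun r => ?_
    by_cases h : r ∈ Ioo (m-b) (m-a)
    · have h2 : m + -r ∈ Ioo a b := ⟨by linarith [h.2], by linarith [h.1]⟩
      rw [Set.indicator_of_mem h, hF, Set.indicator_of_mem h2, sub_eq_add_neg]
    · have h2 : m + -r ∉ Ioo a b := fun hc => h ⟨by linarith [hc.2], by linarith [hc.1]⟩
      rw [Set.indicator_of_notMem h, hF, Set.indicator_of_notMem h2]
  rw [h1, (Measure.measurePreserving_neg (volume : Measure ℝ)).lintegral_comp
    (f := fun r => F (m + r)) (by fun_prop)]
  have h3 : ∀ r : ℝ, F (m + r) = F (r + m) := fun r => by rw [add_comm]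
  simp_rw [h3]
  rw [lintegral_add_right_eq_self F m, hF, lintegral_indicator measurableSet_Ioo]

theorem finite_piece {s : ℝ} (hs0 : 0 < s) (hs1 : s < 1) {ε : ℝ} (hε0 : 0 < ε) (hε2 : ε < 1/2)
    {m : ℝ} (hm1 : 1 ≤ m) (hm5 : m ≤ 5) :
    ∫⁻ p : ℂ × ℂ in {p : ℂ × ℂ | (0 < |‖p.2‖ - m| ∧ |‖p.2‖ - m| < ε) ∧
        (1/2) * Real.exp (-2 * |‖p.2‖ - m| ^ (-s)) < ‖p.1‖ ∧
        ‖p.1‖ < 4},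
      ENNReal.ofReal ((‖p.1‖)⁻¹ ^ 2) < ⊤ := by
  set H0 : ℝ → ℝ≥0∞ :=
    fun t => ENNReal.ofReal (2 * π) * ENNReal.ofReal (Real.log 8 + 2 * |t| ^ (-s)) with hH0
  set H : ℝ → ℝ≥0∞ := fun u => H0 (u - m) with hH
  have hH0m : Measurable H0 := by fun_prop
  have hHm : Measurable H := by fun_prop
  set W : Set ℂ := {w : ℂ | 0 < |‖w‖ - m| ∧ |‖w‖ - m| < ε} with hW
  set S : Set (ℂ × ℂ) := {p : ℂ × ℂ | (0 < |‖p.2‖ - m| ∧ |‖p.2‖ - m| < ε) ∧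
      (1/2) * Real.exp (-2 * |‖p.2‖ - m| ^ (-s)) < ‖p.1‖ ∧
      ‖p.1‖ < 4} with hS
  have e1 : Measurable fun w : ℂ => |‖w‖ - m| := by fun_prop
  have hWm : MeasurableSet W := by
    have : W = (fun w : ℂ => |‖w‖ - m|) ⁻¹' (Ioo 0 ε) := by
      ext w; simp [hW, Set.mem_Ioo]
    rw [this]
    exact e1 measurableSet_Ioo
  have hSm : MeasurableSet S := by
    have f1 : Measurable fun p : ℂ × ℂ => |‖p.2‖ - m| := by fun_prop
    have f2 : Measurable fun p : ℂ × ℂ => ‖p.1‖ := by fun_prop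
    have f3 : Measurable fun p : ℂ × ℂ =>
        (1/2) * Real.exp (-2 * |‖p.2‖ - m| ^ (-s)) := by fun_prop
    rw [hS]
    simp only [Set.setOf_and]
    exact ((measurableSet_lt measurable_const f1).inter
        (measurableSet_lt f1 measurable_const)).inter
      ((measurableSet_lt f3 f2).inter (measurableSet_lt f2 measurable_const))
  have hfm : Measurable fun p : ℂ × ℂ => ENNReal.ofReal ((‖p.1‖)⁻¹ ^ 2) := by fun_prop
  rw [← lintegral_indicator hSm, Measure.volume_eq_prod,
    lintegral_prod_symm' _ (hfm.indicator hSm)]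
  have key : ∀ w : ℂ,
      (∫⁻ z : ℂ, S.indicator (fun p : ℂ × ℂ => ENNReal.ofReal ((‖p.1‖)⁻¹ ^ 2)) (z, w))
        = W.indicator (fun w : ℂ => H (‖w‖)) w := by
    intro w
    by_cases hw : w ∈ W
    · rw [Set.indicator_of_mem hw]
      have ht0 : 0 < |‖w‖ - m| := hw.1
      have htε : |‖w‖ - m| < ε := hw.2
      set av : ℝ := (1/2) * Real.exp (-2 * |‖w‖ - m| ^ (-s)) with hav
      have hav0 : 0 < av := by positivity
      have hav4 : av < 4 := by
        have h1 : Real.exp (-2 * |‖w‖ - m| ^ (-s)) ≤ 1 := by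
          rw [Real.exp_le_one_iff]
          have := Real.rpow_nonneg (abs_nonneg (‖w‖ - m)) (-s)
          nlinarith
        rw [hav]; nlinarith
      have hzind : ∀ z : ℂ,
          S.indicator (fun p : ℂ × ℂ => ENNReal.ofReal ((‖p.1‖)⁻¹ ^ 2)) (z, w)
            = ({z : ℂ | av < ‖z‖ ∧ ‖z‖ < 4}).indicator
                (fun z : ℂ => (fun r : ℝ => ENNReal.ofReal (r⁻¹ ^ 2)) (‖z‖)) z := by
        intro z
        by_cases hz : z ∈ {z : ℂ | av < ‖z‖ ∧ ‖z‖ < 4}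
        · rw [Set.indicator_of_mem (show (z, w) ∈ S from ⟨hw, hz.1, hz.2⟩),
            Set.indicator_of_mem hz]
        · refine (Set.indicator_of_notMem (fun hc => hz ⟨hc.2.1, hc.2.2⟩) _).trans
            (Set.indicator_of_notMem hz _).symm
      calc (∫⁻ z : ℂ,
              S.indicator (fun p : ℂ × ℂ => ENNReal.ofReal ((‖p.1‖)⁻¹ ^ 2)) (z, w))
          = ∫⁻ z : ℂ in {z : ℂ | av < ‖z‖ ∧ ‖z‖ < 4},
              (fun r : ℝ => ENNReal.ofReal (r⁻¹ ^ 2)) (‖z‖) := by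
            simp_rw [hzind]
            rw [lintegral_indicator]
            have : Measurable fun z : ℂ => ‖z‖ - av := by fun_prop
            have h4 : Measurable fun z : ℂ => ‖z‖ := by fun_prop
            simp only [Set.setOf_and]
            exact (measurableSet_lt measurable_const h4).inter
              (measurableSet_lt h4 measurable_const)
        _ = ∫⁻ r in Ioo av 4, ENNReal.ofReal (2 * π) *
              (ENNReal.ofReal r * (fun r : ℝ => ENNReal.ofReal (r⁻¹ ^ 2)) r) :=
            lintegral_annulus (G := fun r : ℝ => ENNReal.ofReal (r⁻¹ ^ 2)) (by fun_prop) hav0.le 4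
        _ = ∫⁻ r in Ioo av 4, ENNReal.ofReal (2 * π) * ENNReal.ofReal r⁻¹ := by
            refine setLIntegral_congr_fun measurableSet_Ioo
              (fun r hr => ?_)
            have hr0 : 0 < r := hav0.trans hr.1
            congr 1
            rw [← ENNReal.ofReal_mul hr0.le]
            congr 1
            field_simp
        _ = ENNReal.ofReal (2 * π) * ENNReal.ofReal (Real.log 4 - Real.log av) := by
            rw [lintegral_const_mul _ (show Measurable fun r : ℝ => ENNReal.ofReal r⁻¹ by fun_prop),
              lintegral_inv_Ioo hav0 hav4]
        _ = H (‖w‖) := by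
            rw [hH]
            simp only [hH0]
            congr 1
            rw [hav, Real.log_mul (by norm_num) (Real.exp_ne_zero _), Real.log_exp]
            have h8 : Real.log 8 = Real.log 4 + Real.log 2 := by
              rw [show (8:ℝ) = 4 * 2 by norm_num, Real.log_mul (by norm_num) (by norm_num)]
            have h12 : Real.log ((1:ℝ)/2) = -Real.log 2 := by
              rw [one_div, Real.log_inv]
            rw [h12]
            ring_nf
            rw [h8]
            ring
    · rw [Set.indicator_of_notMem hw]
      have : ∀ z : ℂ,
          S.indicator (fun p : ℂ × ℂ => ENNReal.ofReal ((‖p.1‖)⁻¹ ^ 2)) (z, w) = 0 :=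
        fun z => Set.indicator_of_notMem (fun hc => hw ⟨hc.1.1, hc.1.2⟩) _
      simp only [this, lintegral_zero]
  simp_rw [key]
  rw [lintegral_indicator hWm]
  have haeq : W =ᵐ[volume] {w : ℂ | m - ε < ‖w‖ ∧ ‖w‖ < m + ε} := by
    rw [MeasureTheory.ae_eq_set]
    constructor
    · have : W \ {w : ℂ | m - ε < ‖w‖ ∧ ‖w‖ < m + ε} = ∅ := by
        rw [Set.diff_eq_empty]
        intro w hw
        have := abs_lt.1 hw.2
        exact ⟨by linarith [this.1], by linarith [this.2]⟩
      rw [this]; exact measure_empty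
    · refine measure_mono_null (fun w hw => ?_) (Measure.addHaar_sphere (μ := (volume : Measure ℂ)) 0 m)
      rcases hw with ⟨h1', h2'⟩
      have habsw : |‖w‖ - m| < ε := abs_lt.2 ⟨by linarith [h1'.1], by linarith [h1'.2]⟩
      have hnl : ¬ (0 < |‖w‖ - m|) := fun hc => h2' ⟨hc, habsw⟩
      have h0 : ‖w‖ = m := by
        have hnn := abs_nonneg (‖w‖ - m)
        have h00 : |‖w‖ - m| = 0 := le_antisymm (not_lt.1 hnl) hnn
        have h01 := abs_eq_zero.1 h00
        linarith [sub_eq_zero.1 h01]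
      rw [mem_sphere_iff_norm]
      simpa using h0
  rw [setLIntegral_congr haeq]
  rw [lintegral_annulus hHm (by linarith : (0:ℝ) ≤ m - ε) (m + ε)]
  have hbound : ∀ r ∈ Ioo (m - ε) (m + ε),
      ENNReal.ofReal (2 * π) * (ENNReal.ofReal r * H r)
        ≤ ENNReal.ofReal (2 * π) * (ENNReal.ofReal 6 * H r) := by
    intro r hr
    refine mul_le_mul_right (mul_le_mul_left (ENNReal.ofReal_le_ofReal ?_) _) _
    have := hr.2; linarith
  refine lt_of_le_of_lt (setLIntegral_mono' measurableSet_Ioo hbound) ?_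
  rw [lintegral_const_mul _ (by fun_prop : Measurable fun r => ENNReal.ofReal 6 * H r),
    lintegral_const_mul _ hHm]
  refine ENNReal.mul_lt_top ENNReal.ofReal_lt_top (ENNReal.mul_lt_top ENNReal.ofReal_lt_top ?_)
  -- ∫⁻ r in Ioo (m-ε) (m+ε), H r < ⊤
  have hsplit : Ioo (m - ε) (m + ε) ⊆ (Ioo (m - ε) m ∪ Ioo m (m + ε)) ∪ {m} := by
    intro x hx
    rcases lt_trichotomy x m with h | h | h
    · exact Or.inl (Or.inl ⟨hx.1, h⟩)
    · exact Or.inr (by simp [h])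
    · exact Or.inl (Or.inr ⟨h, hx.2⟩)
  have hJ : ∫⁻ t in Ioo (0:ℝ) ε, H0 t < ⊤ := by
    have hb2 : ∀ t ∈ Ioo (0:ℝ) ε, H0 t ≤ ENNReal.ofReal (2 * π) *
        (ENNReal.ofReal (Real.log 8) + ENNReal.ofReal 2 * ENNReal.ofReal (t ^ (-s))) := by
      intro t ht
      simp only [hH0]
      refine mul_le_mul_right ?_ _
      rw [abs_of_pos ht.1, ← ENNReal.ofReal_mul (by norm_num : (0:ℝ) ≤ 2)]
      exact ENNReal.ofReal_add_le
    refine lt_of_le_of_lt (setLIntegral_mono' measurableSet_Ioo hb2) ?_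
    rw [lintegral_const_mul _ (show Measurable fun t : ℝ =>
      ENNReal.ofReal (Real.log 8) + ENNReal.ofReal 2 * ENNReal.ofReal (t ^ (-s)) by fun_prop)]
    refine ENNReal.mul_lt_top ENNReal.ofReal_lt_top ?_
    rw [lintegral_add_left measurable_const, lintegral_const_mul _ (show Measurable fun t : ℝ => ENNReal.ofReal (t ^ (-s)) by fun_prop),
      setLIntegral_const]
    refine ENNReal.add_lt_top.2 ⟨ENNReal.mul_lt_top ENNReal.ofReal_lt_top ?_,
      ENNReal.mul_lt_top ENNReal.ofReal_lt_top (lintegral_rpow_Ioo_lt_top hs1 hε0)⟩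
    rw [Real.volume_Ioo]
    exact ENNReal.ofReal_lt_top
  calc ∫⁻ r in Ioo (m - ε) (m + ε), H r
      ≤ ∫⁻ r in (Ioo (m - ε) m ∪ Ioo m (m + ε)) ∪ {m}, H r := lintegral_mono_set hsplit
    _ ≤ (∫⁻ r in Ioo (m - ε) m ∪ Ioo m (m + ε), H r) + ∫⁻ r in ({m} : Set ℝ), H r :=
        lintegral_union_le _ _ _
    _ ≤ ((∫⁻ r in Ioo (m - ε) m, H r) + ∫⁻ r in Ioo m (m + ε), H r) + ∫⁻ r in ({m} : Set ℝ), H r :=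
        add_le_add_left (lintegral_union_le _ _ _) _
    _ < ⊤ := by
        have hz : ∫⁻ r in ({m} : Set ℝ), H r = 0 :=
          setLIntegral_measure_zero _ _ Real.volume_singleton
        have hleft : ∫⁻ r in Ioo (m - ε) m, H r = ∫⁻ t in Ioo (0:ℝ) ε, H0 t := by
          have e' : Ioo (m - ε) m = Ioo (m - ε) (m - 0) := by rw [sub_zero]
          have hcg : ∀ r ∈ Ioo (m - ε) (m - 0), H r = H0 (m - r) := by
            intro r _
            simp only [hH, hH0]
            rw [abs_sub_comm]
          rw [e', setLIntegral_congr_fun measurableSet_Ioo hcg,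
            lintegral_Ioo_reflect hH0m m 0 ε]
        have hright : ∫⁻ r in Ioo m (m + ε), H r = ∫⁻ t in Ioo (0:ℝ) ε, H0 t := by
          have e' : Ioo m (m + ε) = Ioo (0 + m) (ε + m) := by rw [zero_add, add_comm]
          rw [e']
          exact lintegral_Ioo_shift (G := H0) m 0 ε
        rw [hz, hleft, hright, add_zero]
        exact ENNReal.add_lt_top.2 ⟨hJ, hJ⟩

theorem infinite_piece {s q : ℝ} (hs0 : 0 < s) (hs1 : s < 1) (hq : 1 / s - 1 ≤ q)
    {ε : ℝ} (hε0 : 0 < ε) (hε2 : ε < 1/2) :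
    ∫⁻ p : ℂ × ℂ in {p : ℂ × ℂ | (3 < ‖p.2‖ ∧ ‖p.2‖ < 3 + ε) ∧
        Real.exp (-((‖p.2‖ - 3) ^ (-s))) < ‖p.1‖ ∧ ‖p.1‖ < 1},
      ENNReal.ofReal ((‖p.1‖)⁻¹ ^ 2 * logPlus ((‖p.1‖)⁻¹) ^ q) = ⊤ := by
  have hq0 : 0 < q := by
    have h1s : 1 < 1 / s := (one_lt_div hs0).2 hs1
    linarith
  set c : ℝ := (2:ℝ) ^ (-(q + 1)) with hc
  have hc0 : 0 < c := Real.rpow_pos_of_pos (by norm_num) _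
  set G0 : ℝ → ℝ≥0∞ := fun t => ENNReal.ofReal c * ENNReal.ofReal t⁻¹ with hG0
  set G : ℝ → ℝ≥0∞ := fun u => G0 (u - 3) with hG
  have hG0m : Measurable G0 := by fun_prop
  have hGm : Measurable G := by fun_prop
  set W : Set ℂ := {w : ℂ | 3 < ‖w‖ ∧ ‖w‖ < 3 + ε} with hW
  set D : Set (ℂ × ℂ) := {p : ℂ × ℂ | (3 < ‖p.2‖ ∧ ‖p.2‖ < 3 + ε) ∧
      Real.exp (-((‖p.2‖ - 3) ^ (-s))) < ‖p.1‖ ∧ ‖p.1‖ < 1} with hD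
  have hWm : MeasurableSet W := by
    have h4 : Measurable fun w : ℂ => ‖w‖ := by fun_prop
    rw [hW]; simp only [Set.setOf_and]
    exact (measurableSet_lt measurable_const h4).inter (measurableSet_lt h4 measurable_const)
  have hDm : MeasurableSet D := by
    have f1 : Measurable fun p : ℂ × ℂ => ‖p.2‖ := by fun_prop
    have f2 : Measurable fun p : ℂ × ℂ => ‖p.1‖ := by fun_prop
    have f3 : Measurable fun p : ℂ × ℂ =>
        Real.exp (-((‖p.2‖ - 3) ^ (-s))) := by fun_prop
    rw [hD]; simp only [Set.setOf_and]
    exact ((measurableSet_lt measurable_const f1).inter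
        (measurableSet_lt f1 measurable_const)).inter
      ((measurableSet_lt f3 f2).inter (measurableSet_lt f2 measurable_const))
  have hlpm : Measurable logPlus := Real.measurable_log.max measurable_const
  have hfm : Measurable fun p : ℂ × ℂ =>
      ENNReal.ofReal ((‖p.1‖)⁻¹ ^ 2 * logPlus ((‖p.1‖)⁻¹) ^ q) := by
    apply Measurable.ennreal_ofReal
    apply Measurable.mul
    · fun_prop
    · have h1 : Measurable fun p : ℂ × ℂ => logPlus ((‖p.1‖)⁻¹) :=
        hlpm.comp (by fun_prop)
      exact h1.pow_const q
  rw [← lintegral_indicator hDm, Measure.volume_eq_prod,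
    lintegral_prod_symm' _ (hfm.indicator hDm), eq_top_iff]
  -- the key lower bound for the inner integral
  have hpoint : ∀ w : ℂ, W.indicator (fun w : ℂ => G (‖w‖)) w ≤
      ∫⁻ z : ℂ, D.indicator (fun p : ℂ × ℂ =>
        ENNReal.ofReal ((‖p.1‖)⁻¹ ^ 2 * logPlus ((‖p.1‖)⁻¹) ^ q)) (z, w) := by
    intro w
    by_cases hw : w ∈ W
    · rw [Set.indicator_of_mem hw]
      have ht0 : 0 < ‖w‖ - 3 := by have := hw.1; simp only [hW, mem_setOf_eq] at hw; linarith [hw.1]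
      have htε : ‖w‖ - 3 < ε := by simp only [hW, mem_setOf_eq] at hw; linarith [hw.2]
      set t : ℝ := ‖w‖ - 3 with htdef
      set T : ℝ := t ^ (-s) with hT
      have hT0 : 0 < T := Real.rpow_pos_of_pos ht0 _
      set Ann : Set ℂ := {z : ℂ | Real.exp (-T) < ‖z‖ ∧ ‖z‖ < 1} with hAnn
      set Ann2 : Set ℂ := {z : ℂ |
        Real.exp (-T) < ‖z‖ ∧ ‖z‖ < Real.exp (-(T/2))} with hAnn2
      have hzind : ∀ z : ℂ, D.indicator (fun p : ℂ × ℂ =>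
          ENNReal.ofReal ((‖p.1‖)⁻¹ ^ 2 * logPlus ((‖p.1‖)⁻¹) ^ q)) (z, w)
          = Ann.indicator (fun z : ℂ =>
              ENNReal.ofReal ((‖z‖)⁻¹ ^ 2 * logPlus ((‖z‖)⁻¹) ^ q)) z := by
        intro z
        by_cases hz : z ∈ Ann
        · rw [Set.indicator_of_mem (show (z, w) ∈ D from ⟨hw, hz.1, hz.2⟩),
            Set.indicator_of_mem hz]
        · exact (Set.indicator_of_notMem (fun hcon => hz ⟨hcon.2.1, hcon.2.2⟩) _).trans
            (Set.indicator_of_notMem hz _).symm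
      have hAnn2m : MeasurableSet Ann2 := by
        have h4 : Measurable fun z : ℂ => ‖z‖ := by fun_prop
        rw [hAnn2]; simp only [Set.setOf_and]
        exact (measurableSet_lt measurable_const h4).inter (measurableSet_lt h4 measurable_const)
      have hsub : Ann2 ⊆ Ann := by
        intro z hz
        refine ⟨hz.1, lt_trans hz.2 ?_⟩
        rw [← Real.exp_zero]
        apply Real.exp_lt_exp.2
        linarith
      calc G (‖w‖)
          = ENNReal.ofReal c * ENNReal.ofReal t⁻¹ := rfl
        _ ≤ ENNReal.ofReal ((T/2) ^ (q+1)) := by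
            rw [← ENNReal.ofReal_mul hc0.le]
            apply ENNReal.ofReal_le_ofReal
            have h2 : (T/2) ^ (q+1) = t ^ (-s * (q+1)) * c := by
              rw [div_eq_mul_inv, Real.mul_rpow hT0.le (by norm_num),
                Real.inv_rpow (by norm_num : (0:ℝ) ≤ 2), ← Real.rpow_neg (by norm_num : (0:ℝ) ≤ 2),
                hT, ← Real.rpow_mul ht0.le]
            have h3 : t⁻¹ ≤ t ^ (-s * (q+1)) := by
              rw [← Real.rpow_neg_one t]
              apply Real.rpow_le_rpow_of_exponent_ge ht0 (by linarith : t ≤ 1)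
              nlinarith [(div_le_iff₀ hs0).1 (by linarith : 1/s ≤ q+1)]
            rw [h2]
            nlinarith
        _ ≤ ENNReal.ofReal (2*π) * (ENNReal.ofReal ((T/2) ^ q) *
              ENNReal.ofReal (Real.log (Real.exp (-(T/2))) - Real.log (Real.exp (-T)))) := by
            rw [Real.log_exp, Real.log_exp]
            have harg : -(T/2) - -T = T/2 := by ring
            rw [harg, ← ENNReal.ofReal_mul (by positivity),
              ← Real.rpow_add_one (by positivity : (T:ℝ)/2 ≠ 0)]
            have h2pi : (1:ℝ≥0∞) ≤ ENNReal.ofReal (2*π) := by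
              rw [show (1:ℝ≥0∞) = ENNReal.ofReal 1 by simp]
              exact ENNReal.ofReal_le_ofReal (by nlinarith [Real.pi_gt_three])
            calc ENNReal.ofReal ((T/2) ^ (q+1))
                = 1 * ENNReal.ofReal ((T/2) ^ (q+1)) := (one_mul _).symm
              _ ≤ ENNReal.ofReal (2*π) * ENNReal.ofReal ((T/2) ^ (q+1)) :=
                  mul_le_mul_left h2pi _
        _ = ENNReal.ofReal (2*π) * (ENNReal.ofReal ((T/2) ^ q) *
              ∫⁻ r in Ioo (Real.exp (-T)) (Real.exp (-(T/2))), ENNReal.ofReal r⁻¹) := by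
            rw [lintegral_inv_Ioo (Real.exp_pos _) (Real.exp_lt_exp.2 (by linarith))]
        _ = ∫⁻ r in Ioo (Real.exp (-T)) (Real.exp (-(T/2))), ENNReal.ofReal (2*π) *
              (ENNReal.ofReal r * (fun r : ℝ => ENNReal.ofReal ((T/2) ^ q * r⁻¹ ^ 2)) r) := by
            rw [← lintegral_const_mul _ (show Measurable fun r : ℝ => ENNReal.ofReal r⁻¹ by fun_prop),
              ← lintegral_const_mul _ (show Measurable fun r : ℝ =>
                ENNReal.ofReal ((T/2) ^ q) * ENNReal.ofReal r⁻¹ by fun_prop)]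
            refine setLIntegral_congr_fun measurableSet_Ioo
              (fun r hr => ?_)
            have hr0 : 0 < r := lt_trans (Real.exp_pos _) hr.1
            congr 1
            rw [← ENNReal.ofReal_mul (by positivity), ← ENNReal.ofReal_mul hr0.le]
            congr 1
            field_simp
        _ = ∫⁻ z : ℂ in Ann2, (fun r : ℝ => ENNReal.ofReal ((T/2) ^ q * r⁻¹ ^ 2))
              (‖z‖) :=
            (lintegral_annulus (G := fun r : ℝ => ENNReal.ofReal ((T/2) ^ q * r⁻¹ ^ 2))
              (by fun_prop) (Real.exp_pos _).le _).symm
        _ ≤ ∫⁻ z : ℂ in Ann2,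
              ENNReal.ofReal ((‖z‖)⁻¹ ^ 2 * logPlus ((‖z‖)⁻¹) ^ q) := by
            refine setLIntegral_mono' hAnn2m fun z hz => ?_
            have hz0 : 0 < ‖z‖ := lt_trans (Real.exp_pos _) hz.1
            apply ENNReal.ofReal_le_ofReal
            have hinv : Real.exp (T/2) ≤ (‖z‖)⁻¹ := by
              rw [show Real.exp (T/2) = (Real.exp (-(T/2)))⁻¹ by rw [Real.exp_neg, inv_inv]]
              exact inv_anti₀ hz0 hz.2.le
            have hlog : T/2 ≤ Real.log ((‖z‖)⁻¹) := by
              have := Real.log_le_log (Real.exp_pos _) hinv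
              rwa [Real.log_exp] at this
            have hlp : T/2 ≤ logPlus ((‖z‖)⁻¹) := le_trans hlog (le_max_left _ _)
            have hrq : (T/2) ^ q ≤ logPlus ((‖z‖)⁻¹) ^ q :=
              Real.rpow_le_rpow (by positivity) hlp hq0.le
            have hb : 0 ≤ (‖z‖)⁻¹ ^ 2 := by positivity
            nlinarith [Real.rpow_nonneg (show (0:ℝ) ≤ T/2 by positivity) q]
        _ ≤ ∫⁻ z : ℂ in Ann,
              ENNReal.ofReal ((‖z‖)⁻¹ ^ 2 * logPlus ((‖z‖)⁻¹) ^ q) :=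
            lintegral_mono_set hsub
        _ = ∫⁻ z : ℂ, D.indicator (fun p : ℂ × ℂ =>
              ENNReal.ofReal ((‖p.1‖)⁻¹ ^ 2 * logPlus ((‖p.1‖)⁻¹) ^ q))
              (z, w) := by
            simp_rw [hzind]
            rw [lintegral_indicator]
            have h4 : Measurable fun z : ℂ => ‖z‖ := by fun_prop
            rw [hAnn]; simp only [Set.setOf_and]
            exact (measurableSet_lt measurable_const h4).inter
              (measurableSet_lt h4 measurable_const)
    · rw [Set.indicator_of_notMem hw]
      exact bot_le
  refine le_trans ?_ (lintegral_mono hpoint)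
  rw [lintegral_indicator hWm]
  rw [lintegral_annulus hGm (by norm_num : (0:ℝ) ≤ 3) (3 + ε)]
  have hlast : ∫⁻ u in Ioo (3:ℝ) (3 + ε), G u = ⊤ := by
    have e' : Ioo (3:ℝ) (3 + ε) = Ioo (0 + 3) (ε + 3) := by rw [zero_add, add_comm]
    rw [e', lintegral_Ioo_shift (G := G0) 3 0 ε, hG0]
    rw [lintegral_const_mul _ (show Measurable fun t : ℝ => ENNReal.ofReal t⁻¹ by fun_prop),
      lintegral_inv_Ioo_top hε0, ENNReal.mul_top]
    simp [ENNReal.ofReal_eq_zero, not_le, hc0]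
  have hstep : ∀ u ∈ Ioo (3:ℝ) (3 + ε), G u ≤ ENNReal.ofReal (2*π) * (ENNReal.ofReal u * G u) := by
    intro u hu
    have h1 : (1:ℝ≥0∞) ≤ ENNReal.ofReal (2*π) := by
      rw [show (1:ℝ≥0∞) = ENNReal.ofReal 1 by simp]
      exact ENNReal.ofReal_le_ofReal (by nlinarith [Real.pi_gt_three])
    have h2 : (1:ℝ≥0∞) ≤ ENNReal.ofReal u := by
      rw [show (1:ℝ≥0∞) = ENNReal.ofReal 1 by simp]
      exact ENNReal.ofReal_le_ofReal (by linarith [hu.1])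
    calc G u = 1 * G u := (one_mul _).symm
      _ ≤ (ENNReal.ofReal (2*π) * ENNReal.ofReal u) * G u := by
          refine mul_le_mul_left ?_ _
          calc (1:ℝ≥0∞) = 1 * 1 := (one_mul _).symm
            _ ≤ ENNReal.ofReal (2*π) * ENNReal.ofReal u := mul_le_mul' h1 h2
      _ = ENNReal.ofReal (2*π) * (ENNReal.ofReal u * G u) := mul_assoc _ _ _
  calc (⊤:ℝ≥0∞) = ∫⁻ u in Ioo (3:ℝ) (3 + ε), G u := hlast.symm
    _ ≤ ∫⁻ u in Ioo (3:ℝ) (3 + ε), ENNReal.ofReal (2*π) * (ENNReal.ofReal u * G u) :=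
        setLIntegral_mono' measurableSet_Ioo hstep

end Helpers

/-- **Lemma 4.1.** Let `s ∈ (0,1)`, `q ≥ 1/s - 1`, and let `Ω ⊆ {|z| < 4, 1 < |w| < 6} ⊆ ℂ²`
be a domain whose fibers `Ω_w` depend only on `|w|`, avoid a disc `{|z| ≤ c}` away from
`|w| ∈ {3,4}`, and for `t = |w|-3` (resp. `t = |w|-4`) with `0 < |t| ≤ ε` satisfy
`{e^{-|t|^{-s}} < |z| < 1} ⊆ Ω_w ⊆ {(1/2)e^{-2|t|^{-s}} < |z| < 4}` (resp. the upper bound).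
Then `1/z ∈ A²(Ω)` but `1/z ∉ A²(log A)^q(Ω)`. -/
theorem stmt16 (s q : ℝ) (hs : s ∈ Set.Ioo (0:ℝ) 1) (hq : 1 / s - 1 ≤ q)
    (Ω : Set (ℂ × ℂ)) (hopen : IsOpen Ω) (hconn : IsConnected Ω)
    (hsub : Ω ⊆ {p : ℂ × ℂ |
      ‖p.1‖ < 4 ∧ 1 < ‖p.2‖ ∧ ‖p.2‖ < 6})
    (hfib : ∀ w w' : ℂ, ‖w‖ = ‖w'‖ →
      {z : ℂ | (z, w) ∈ Ω} = {z : ℂ | (z, w') ∈ Ω})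
    (ε c : ℝ) (hε : ε ∈ Set.Ioo (0:ℝ) (1/2)) (hc : 0 < c)
    (h1 : ∀ w : ℂ, ε ≤ |‖w‖ - 3| → ε ≤ |‖w‖ - 4| →
      ∀ z : ℂ, ‖z‖ ≤ c → (z, w) ∉ Ω)
    (h2 : ∀ w : ℂ, 0 < |‖w‖ - 3| → |‖w‖ - 3| ≤ ε →
      ({z : ℂ | Real.exp (-(|‖w‖ - 3| ^ (-s))) < ‖z‖ ∧
          ‖z‖ < 1} ⊆ {z : ℂ | (z, w) ∈ Ω} ∧
       {z : ℂ | (z, w) ∈ Ω} ⊆ {z : ℂ |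
          (1/2) * Real.exp (-2 * |‖w‖ - 3| ^ (-s)) < ‖z‖ ∧
          ‖z‖ < 4}))
    (h3 : ∀ w : ℂ, 0 < |‖w‖ - 4| → |‖w‖ - 4| ≤ ε →
      {z : ℂ | (z, w) ∈ Ω} ⊆ {z : ℂ |
        (1/2) * Real.exp (-2 * |‖w‖ - 4| ^ (-s)) < ‖z‖ ∧
        ‖z‖ < 4}) :
    DifferentiableOn ℂ (fun p : ℂ × ℂ => (p.1)⁻¹) Ω ∧
    (∫⁻ p in Ω, ENNReal.ofReal (‖(p.1)⁻¹‖ ^ 2)) < ⊤ ∧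
    (∫⁻ p in Ω, ENNReal.ofReal (‖(p.1)⁻¹‖ ^ 2 * logPlus ‖(p.1)⁻¹‖ ^ q)) = ⊤ := by
  obtain ⟨hs0, hs1⟩ := hs
  obtain ⟨hε0, hε2⟩ := hε
  -- The function z is nonvanishing on Ω
  have hznz : ∀ p : ℂ × ℂ, p ∈ Ω → p.1 ≠ 0 := by
    rintro ⟨z, w⟩ hp hz0
    have hz0' : z = 0 := hz0
    rw [hz0'] at hp
    by_cases hcase3 : ‖w‖ = 3
    · rcases Metric.isOpen_iff.1 hopen (0, w) hp with ⟨δ, hδ0, hball⟩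
      set τ : ℝ := min (δ/2) ε with hτ
      have hτ0 : 0 < τ := lt_min (by linarith) hε0
      have hτε : τ ≤ ε := min_le_right _ _
      set w' : ℂ := w + (τ/3 : ℝ) * w with hw'
      have habsw' : ‖w'‖ = 3 + τ := by
        rw [hw', show w + (τ/3 : ℝ) * w = ((1 + τ/3 : ℝ) : ℂ) * w by push_cast; ring,
          norm_mul, hcase3, Complex.norm_real, Real.norm_eq_abs, abs_of_pos (by positivity : (0:ℝ) < 1 + τ/3)]
        ring
      have hmem : ((0 : ℂ), w') ∈ Ω := by
        apply hball
        rw [Metric.mem_ball, Prod.dist_eq]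
        have hd2 : dist w' w = τ := by
          rw [Complex.dist_eq, hw', show w + (τ/3 : ℝ) * w - w = ((τ/3 : ℝ) : ℂ) * w by ring,
            norm_mul, hcase3, Complex.norm_real, Real.norm_eq_abs, abs_of_pos (by positivity : (0:ℝ) < τ/3)]
          ring
        rw [max_lt_iff]
        constructor
        · simpa using hδ0
        · rw [hd2]
          calc τ ≤ δ/2 := min_le_left _ _
            _ < δ := by linarith
      have ht' : |‖w'‖ - 3| = τ := by rw [habsw']; simp [abs_of_pos hτ0]
      have hup := (h2 w' (by rw [ht']; exact hτ0) (by rw [ht']; exact hτε)).2 hmem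
      have : (1/2) * Real.exp (-2 * |‖w'‖ - 3| ^ (-s)) < ‖(0:ℂ)‖ := hup.1
      rw [norm_zero] at this
      nlinarith [Real.exp_pos (-2 * |‖w'‖ - 3| ^ (-s))]
    · by_cases hcase4 : ‖w‖ = 4
      · rcases Metric.isOpen_iff.1 hopen (0, w) hp with ⟨δ, hδ0, hball⟩
        set τ : ℝ := min (δ/2) ε with hτ
        have hτ0 : 0 < τ := lt_min (by linarith) hε0
        have hτε : τ ≤ ε := min_le_right _ _
        set w' : ℂ := w + (τ/4 : ℝ) * w with hw'
        have habsw' : ‖w'‖ = 4 + τ := by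
          rw [hw', show w + (τ/4 : ℝ) * w = ((1 + τ/4 : ℝ) : ℂ) * w by push_cast; ring,
            norm_mul, hcase4, Complex.norm_real, Real.norm_eq_abs, abs_of_pos (by positivity : (0:ℝ) < 1 + τ/4)]
          ring
        have hmem : ((0 : ℂ), w') ∈ Ω := by
          apply hball
          rw [Metric.mem_ball, Prod.dist_eq]
          have hd2 : dist w' w = τ := by
            rw [Complex.dist_eq, hw', show w + (τ/4 : ℝ) * w - w = ((τ/4 : ℝ) : ℂ) * w by ring,
              norm_mul, hcase4, Complex.norm_real, Real.norm_eq_abs, abs_of_pos (by positivity : (0:ℝ) < τ/4)]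
            ring
          rw [max_lt_iff]
          constructor
          · simpa using hδ0
          · rw [hd2]
            calc τ ≤ δ/2 := min_le_left _ _
              _ < δ := by linarith
        have ht' : |‖w'‖ - 4| = τ := by rw [habsw']; simp [abs_of_pos hτ0]
        have hup := h3 w' (by rw [ht']; exact hτ0) (by rw [ht']; exact hτε) hmem
        have : (1/2) * Real.exp (-2 * |‖w'‖ - 4| ^ (-s)) < ‖(0:ℂ)‖ := hup.1
        rw [norm_zero] at this
        nlinarith [Real.exp_pos (-2 * |‖w'‖ - 4| ^ (-s))]
      · rcases lt_or_ge |‖w‖ - 3| ε with hlt | hge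
        · have h0 : 0 < |‖w‖ - 3| := abs_pos.2 (sub_ne_zero.2 hcase3)
          have hup := (h2 w h0 hlt.le).2 hp
          have : (1/2) * Real.exp (-2 * |‖w‖ - 3| ^ (-s)) < ‖(0:ℂ)‖ := hup.1
          rw [norm_zero] at this
          nlinarith [Real.exp_pos (-2 * |‖w‖ - 3| ^ (-s))]
        · rcases lt_or_ge |‖w‖ - 4| ε with hlt4 | hge4
          · have h0 : 0 < |‖w‖ - 4| := abs_pos.2 (sub_ne_zero.2 hcase4)
            have hup := h3 w h0 hlt4.le hp
            have : (1/2) * Real.exp (-2 * |‖w‖ - 4| ^ (-s)) < ‖(0:ℂ)‖ := hup.1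
            rw [norm_zero] at this
            nlinarith [Real.exp_pos (-2 * |‖w‖ - 4| ^ (-s))]
          · exact h1 w hge hge4 0 (by rw [norm_zero]; exact hc.le) hp
  refine ⟨?_, ?_, ?_⟩
  · -- differentiability
    intro p hp
    exact (differentiableAt_fst.inv (hznz p hp)).differentiableWithinAt
  · -- finiteness of the A² norm
    simp only [norm_inv]
    have hS3 := finite_piece (s := s) hs0 hs1 hε0 hε2 (m := 3) (by norm_num) (by norm_num)
    have hS4 := finite_piece (s := s) hs0 hs1 hε0 hε2 (m := 4) (by norm_num) (by norm_num)
    set S3 : Set (ℂ × ℂ) := {p : ℂ × ℂ |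
      (0 < |‖p.2‖ - (3:ℝ)| ∧ |‖p.2‖ - (3:ℝ)| < ε) ∧
      (1/2) * Real.exp (-2 * |‖p.2‖ - (3:ℝ)| ^ (-s)) < ‖p.1‖ ∧
      ‖p.1‖ < 4} with hS3def
    set S4 : Set (ℂ × ℂ) := {p : ℂ × ℂ |
      (0 < |‖p.2‖ - (4:ℝ)| ∧ |‖p.2‖ - (4:ℝ)| < ε) ∧
      (1/2) * Real.exp (-2 * |‖p.2‖ - (4:ℝ)| ^ (-s)) < ‖p.1‖ ∧
      ‖p.1‖ < 4} with hS4def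
    set SA : Set (ℂ × ℂ) := {p : ℂ × ℂ | c < ‖p.1‖} ∩
      (Metric.ball (0:ℂ) 4 ×ˢ Metric.ball (0:ℂ) 6) with hSAdef
    set SZ : Set (ℂ × ℂ) := {p : ℂ × ℂ | ‖p.2‖ = 3 ∨ ‖p.2‖ = 4} with hSZdef
    have hcover : Ω ⊆ ((SA ∪ S3) ∪ S4) ∪ SZ := by
      intro p hp
      rcases lt_or_ge |‖p.2‖ - 3| ε with hlt | hge
      · by_cases hw3 : ‖p.2‖ = 3
        · exact Or.inr (Or.inl hw3)
        · have h0 : 0 < |‖p.2‖ - 3| := abs_pos.2 (sub_ne_zero.2 hw3)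
          have hmem := (h2 p.2 h0 hlt.le).2 (show (p.1, p.2) ∈ Ω from hp)
          exact Or.inl (Or.inl (Or.inr ⟨⟨h0, hlt⟩, hmem.1, hmem.2⟩))
      · rcases lt_or_ge |‖p.2‖ - 4| ε with hlt4 | hge4
        · by_cases hw4 : ‖p.2‖ = 4
          · exact Or.inr (Or.inr hw4)
          · have h0 : 0 < |‖p.2‖ - 4| := abs_pos.2 (sub_ne_zero.2 hw4)
            have hmem := h3 p.2 h0 hlt4.le (show (p.1, p.2) ∈ Ω from hp)
            exact Or.inl (Or.inr ⟨⟨h0, hlt4⟩, hmem.1, hmem.2⟩)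
        · have hnc : ¬ ‖p.1‖ ≤ c := fun hle => h1 p.2 hge hge4 p.1 hle
            (show (p.1, p.2) ∈ Ω from hp)
          have hsb := hsub hp
          refine Or.inl (Or.inl (Or.inl ⟨not_le.1 hnc, ?_, ?_⟩))
          · rw [mem_ball_zero_iff]; exact hsb.1
          · rw [mem_ball_zero_iff]; exact hsb.2.2
    have hSZ0 : volume SZ = 0 := by
      have hSZeq : SZ = (Set.univ : Set ℂ) ×ˢ
          (Metric.sphere (0:ℂ) 3 ∪ Metric.sphere (0:ℂ) 4) := by
        ext p
        simp only [hSZdef, Set.mem_setOf_eq, Set.mem_prod, Set.mem_univ, true_and,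
          Set.mem_union, mem_sphere_zero_iff_norm]
      rw [hSZeq, Measure.volume_eq_prod, Measure.prod_prod,
        measure_union_null (Measure.addHaar_sphere (μ := (volume : Measure ℂ)) 0 3)
          (Measure.addHaar_sphere (μ := (volume : Measure ℂ)) 0 4), mul_zero]
    have hSZint : ∫⁻ p in SZ, ENNReal.ofReal ((‖p.1‖)⁻¹ ^ 2) = 0 :=
      setLIntegral_measure_zero _ _ hSZ0
    have hSAm : MeasurableSet SA := by
      have f2 : Measurable fun p : ℂ × ℂ => ‖p.1‖ := by fun_prop
      exact (measurableSet_lt measurable_const f2).inter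
        (Metric.isOpen_ball.measurableSet.prod Metric.isOpen_ball.measurableSet)
    have hSAint : ∫⁻ p in SA, ENNReal.ofReal ((‖p.1‖)⁻¹ ^ 2) < ⊤ := by
      have hb : ∀ p ∈ SA, ENNReal.ofReal ((‖p.1‖)⁻¹ ^ 2)
          ≤ ENNReal.ofReal (c⁻¹ ^ 2) := by
        intro p hp
        apply ENNReal.ofReal_le_ofReal
        have h1' : c ≤ ‖p.1‖ := le_of_lt hp.1
        have h2' : (‖p.1‖)⁻¹ ≤ c⁻¹ := inv_anti₀ hc h1'
        have h3' : (0:ℝ) ≤ (‖p.1‖)⁻¹ := by positivity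
        nlinarith
      calc ∫⁻ p in SA, ENNReal.ofReal ((‖p.1‖)⁻¹ ^ 2)
          ≤ ∫⁻ _ in SA, ENNReal.ofReal (c⁻¹ ^ 2) := setLIntegral_mono' hSAm hb
        _ = ENNReal.ofReal (c⁻¹ ^ 2) * volume SA := setLIntegral_const _ _
        _ ≤ ENNReal.ofReal (c⁻¹ ^ 2) *
            volume (Metric.ball (0:ℂ) 4 ×ˢ Metric.ball (0:ℂ) 6) :=
            mul_le_mul_right (measure_mono Set.inter_subset_right) _
        _ < ⊤ := by
            rw [Measure.volume_eq_prod, Measure.prod_prod]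
            exact ENNReal.mul_lt_top ENNReal.ofReal_lt_top
              (ENNReal.mul_lt_top measure_ball_lt_top measure_ball_lt_top)
    calc ∫⁻ p in Ω, ENNReal.ofReal ((‖p.1‖)⁻¹ ^ 2)
        ≤ ∫⁻ p in ((SA ∪ S3) ∪ S4) ∪ SZ, ENNReal.ofReal ((‖p.1‖)⁻¹ ^ 2) :=
          lintegral_mono_set hcover
      _ ≤ (∫⁻ p in (SA ∪ S3) ∪ S4, ENNReal.ofReal ((‖p.1‖)⁻¹ ^ 2)) +
            ∫⁻ p in SZ, ENNReal.ofReal ((‖p.1‖)⁻¹ ^ 2) := lintegral_union_le _ _ _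
      _ ≤ ((∫⁻ p in SA ∪ S3, ENNReal.ofReal ((‖p.1‖)⁻¹ ^ 2)) +
            ∫⁻ p in S4, ENNReal.ofReal ((‖p.1‖)⁻¹ ^ 2)) +
            ∫⁻ p in SZ, ENNReal.ofReal ((‖p.1‖)⁻¹ ^ 2) :=
          add_le_add_left (lintegral_union_le _ _ _) _
      _ ≤ (((∫⁻ p in SA, ENNReal.ofReal ((‖p.1‖)⁻¹ ^ 2)) +
            ∫⁻ p in S3, ENNReal.ofReal ((‖p.1‖)⁻¹ ^ 2)) +
            ∫⁻ p in S4, ENNReal.ofReal ((‖p.1‖)⁻¹ ^ 2)) +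
            ∫⁻ p in SZ, ENNReal.ofReal ((‖p.1‖)⁻¹ ^ 2) :=
          add_le_add_left (add_le_add_left (lintegral_union_le _ _ _) _) _
      _ < ⊤ := by
          rw [hSZint, add_zero]
          exact ENNReal.add_lt_top.2 ⟨ENNReal.add_lt_top.2 ⟨hSAint, hS3⟩, hS4⟩
  · -- divergence of the weighted norm
    simp only [norm_inv]
    have hip := infinite_piece (s := s) (q := q) hs0 hs1 hq hε0 hε2
    have hDsub : {p : ℂ × ℂ | (3 < ‖p.2‖ ∧ ‖p.2‖ < 3 + ε) ∧
        Real.exp (-((‖p.2‖ - 3) ^ (-s))) < ‖p.1‖ ∧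
        ‖p.1‖ < 1} ⊆ Ω := by
      rintro ⟨z, w⟩ ⟨⟨hw1, hw2⟩, hz1, hz2⟩
      have ht0 : 0 < ‖w‖ - 3 := by linarith
      have habs : |‖w‖ - 3| = ‖w‖ - 3 := abs_of_pos ht0
      refine (h2 w (by rw [habs]; exact ht0) (by rw [habs]; linarith)).1 ?_
      refine ⟨?_, hz2⟩
      rw [habs]
      exact hz1
    exact eq_top_iff.2 (hip ▸ lintegral_mono_set hDsub)
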